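/- arXiv:1807.08338 — 2 statements merged into one kernel-verified Lean document; each statement's English description precedes it below -/
import Mathlib

section
/- The reduced MMH slow equation ṡ = −(1 + 1/σ)·s/(s + 1/σ) with σ > 0 and initial condition s(0) = 1 has a strictly decreasing solution s(t) > 0 for all t ≥ 0, which satisfies the implicit (Michaelis–Menten) relation σ·s(t) + log(σ·s(t)) = σ + log σ − (1+σ)t for all t ≥ 0. -/
theorem stmt15 (σ : ℝ) (hσ : 0 < σ) :
    ∃ s : ℝ → ℝ, s 0 = 1 ∧
      (∀ t : ℝ, 0 ≤ t → 0 < s t) ∧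
      (∀ t : ℝ, 0 ≤ t → HasDerivAt s (-(1 + 1 / σ) * s t / (s t + 1 / σ)) t) ∧
      StrictAntiOn s (Set.Ici 0) ∧
      (∀ t : ℝ, 0 ≤ t →
        σ * s t + Real.log (σ * s t) = σ + Real.log σ - (1 + σ) * t) := by
  -- h v = σ e^v + v + log σ
  set h : ℝ → ℝ := fun v => σ * Real.exp v + v + Real.log σ with hh
  have hmono : StrictMono h := by
    intro a b hab
    have := Real.exp_strictMono hab
    simp only [hh]
    nlinarith [Real.exp_pos a, Real.exp_pos b]
  have hcont : Continuous h := by continuity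
  have htop : Filter.Tendsto h Filter.atTop Filter.atTop := by
    apply Filter.tendsto_atTop_add_const_right
    apply Filter.Tendsto.atTop_add_atTop
    · exact (Real.tendsto_exp_atTop.const_mul_atTop hσ)
    · exact Filter.tendsto_id
  have hbot : Filter.Tendsto h Filter.atBot Filter.atBot := by
    apply Filter.tendsto_atBot_add_const_right
    have h1 : Filter.Tendsto (fun v => σ * Real.exp v) Filter.atBot (nhds 0) := by
      simpa using (Real.tendsto_exp_atBot.const_mul σ)
    exact h1.add_atBot (Filter.tendsto_id : Filter.Tendsto _ Filter.atBot Filter.atBot)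
  have hsurj : Function.Surjective h := hcont.surjective htop hbot
  set e : ℝ ≃o ℝ := StrictMono.orderIsoOfSurjective h hmono hsurj with he
  have hecoe : (e : ℝ → ℝ) = h := StrictMono.coe_orderIsoOfSurjective h hmono hsurj
  set g : ℝ → ℝ := ⇑e.symm with hg
  have hgcont : Continuous g := e.symm.continuous
  have hhg : ∀ y, h (g y) = y := by
    intro y
    have := e.apply_symm_apply y
    rwa [← hecoe]
  have hgh : ∀ v, g (h v) = v := by
    intro v
    have := e.symm_apply_apply v
    rwa [hecoe] at this
  set c : ℝ → ℝ := fun t => σ + Real.log σ - (1 + σ) * t with hc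
  set s : ℝ → ℝ := fun t => Real.exp (g (c t)) with hs
  have hspos : ∀ t, 0 < s t := fun t => Real.exp_pos _
  have h0 : h 0 = σ + Real.log σ := by simp [hh]
  have hs0 : s 0 = 1 := by
    simp only [hs, hc]
    rw [show σ + Real.log σ - (1 + σ) * 0 = h 0 by rw [h0]; ring, hgh]
    exact Real.exp_zero
  have hrel : ∀ t, σ * s t + Real.log (σ * s t) = σ + Real.log σ - (1 + σ) * t := by
    intro t
    have := hhg (c t)
    simp only [hh] at this
    simp only [hs]
    rw [Real.log_mul (ne_of_gt hσ) (ne_of_gt (Real.exp_pos _)), Real.log_exp]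
    simp only [hc] at this
    linarith [this]
  have hanti : StrictAnti s := by
    intro a b hab
    apply Real.exp_lt_exp.2
    apply e.symm.strictMono
    simp only [hc]
    nlinarith
  have hderiv : ∀ t, HasDerivAt s (-(1 + 1 / σ) * s t / (s t + 1 / σ)) t := by
    intro t
    set v := g (c t) with hv
    have hhd : HasDerivAt h (σ * Real.exp v + 1) v := by
      have : HasDerivAt (fun x => σ * Real.exp x + x + Real.log σ)
          (σ * Real.exp v + 1) v := by
        simpa using (((Real.hasDerivAt_exp v).const_mul σ).add (hasDerivAt_id v)).add_const
          (Real.log σ)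
      simpa [hh] using this
    have hne : σ * Real.exp v + 1 ≠ 0 := by positivity
    have hgd : HasDerivAt g (σ * Real.exp v + 1)⁻¹ (c t) := by
      apply HasDerivAt.of_local_left_inverse (hgcont.continuousAt) hhd hne
      exact Filter.Eventually.of_forall hhg
    have hcd : HasDerivAt c (-(1 + σ)) t := by
      simpa using ((hasDerivAt_id t).const_mul (1 + σ)).const_sub (σ + Real.log σ)
    have : HasDerivAt s (Real.exp v * ((σ * Real.exp v + 1)⁻¹ * -(1 + σ))) t := by
      exact (Real.hasDerivAt_exp v).comp t (hgd.comp t hcd)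
    convert this using 1
    have hsv : s t = Real.exp v := rfl
    rw [hsv]
    have h1 : Real.exp v + 1 / σ > 0 := by positivity
    field_simp
    ring
  exact ⟨s, hs0, fun t _ => hspos t, fun t _ => hderiv t,
    hanti.strictAntiOn _,
    fun t _ => hrel t⟩
end

section
/- The isothermal effectiveness factor η(Φ) = (3/Φ)·(coth(Φ) − 1/Φ) is strictly decreasing on (0,∞), satisfies 0 < η(Φ) < 1 for all Φ > 0, η(Φ) → 1 as Φ → 0⁺, and Φ·η(Φ) → 3 as Φ → ∞ (so η(Φ) ~ 3/Φ). -/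
open Real Set Filter

private lemma deriv_pos_aux (f f' : ℝ → ℝ) (hd : ∀ y, HasDerivAt f (f' y) y)
    (h0 : f 0 = 0) (hpos : ∀ y, 0 < y → 0 < f' y) : ∀ x, 0 < x → 0 < f x := by
  intro x hx
  have hmono : StrictMonoOn f (Set.Ici 0) := by
    apply strictMonoOn_of_deriv_pos (convex_Ici 0)
    · exact fun y _ => (hd y).differentiableAt.continuousAt.continuousWithinAt
    · intro y hy
      rw [interior_Ici] at hy
      rw [(hd y).deriv]
      exact hpos y hy
  have := hmono Set.self_mem_Ici (Set.mem_Ici.2 hx.le) hx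
  rwa [h0] at this

private lemma lemP : ∀ x : ℝ, 0 < x → 0 < x * Real.cosh x - Real.sinh x := by
  apply deriv_pos_aux _ (fun y => y * Real.sinh y)
  · intro y
    have h := ((hasDerivAt_id' y).mul (Real.hasDerivAt_cosh y)).sub (Real.hasDerivAt_sinh y)
    refine h.congr_deriv ?_
    ring
  · simp
  · intro y hy
    exact mul_pos hy (Real.sinh_pos_iff.2 hy)

private lemma lemQ : ∀ x : ℝ, 0 < x →
    0 < x ^ 2 * Real.sinh x - 3 * x * Real.cosh x + 3 * Real.sinh x := by
  apply deriv_pos_aux _ (fun y => y * (y * Real.cosh y - Real.sinh y))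
  · intro y
    have h := (((hasDerivAt_pow 2 y).mul (Real.hasDerivAt_sinh y)).sub
        (((hasDerivAt_const y (3:ℝ)).mul (hasDerivAt_id' y)).mul (Real.hasDerivAt_cosh y))).add
        ((Real.hasDerivAt_sinh y).const_mul 3)
    refine h.congr_deriv ?_
    simp only [Pi.mul_apply, Pi.pow_apply, Pi.sub_apply]
    push_cast
    ring
  · simp
  · intro y hy
    exact mul_pos hy (lemP y hy)

-- m' = 2x + x cosh² + x sinh² − 3 sinh cosh  is positive
private lemma lemM1 : ∀ x : ℝ, 0 < x →
    0 < 2 * x + x * Real.cosh x ^ 2 + x * Real.sinh x ^ 2 - 3 * Real.sinh x * Real.cosh x := by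
  apply deriv_pos_aux _ (fun y => 4 * Real.sinh y * (y * Real.cosh y - Real.sinh y))
  · intro y
    have h := ((((hasDerivAt_id' y).const_mul 2).add
        ((hasDerivAt_id' y).mul ((Real.hasDerivAt_cosh y).pow 2))).add
        ((hasDerivAt_id' y).mul ((Real.hasDerivAt_sinh y).pow 2))).sub
        ((((Real.hasDerivAt_sinh y).const_mul 3).mul (Real.hasDerivAt_cosh y)))
    refine h.congr_deriv ?_
    simp only [Pi.mul_apply, Pi.pow_apply, Pi.sub_apply]
    have key := Real.cosh_sq_sub_sinh_sq y
    push_cast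
    nlinarith [key]
  · simp
  · intro y hy
    have hs := Real.sinh_pos_iff.2 hy
    have hp := lemP y hy
    nlinarith

-- m = x² + x sinh cosh − 2 sinh²  is positive
private lemma lemM : ∀ x : ℝ, 0 < x →
    0 < x ^ 2 + x * Real.sinh x * Real.cosh x - 2 * Real.sinh x ^ 2 := by
  apply deriv_pos_aux _
      (fun y => 2 * y + y * Real.cosh y ^ 2 + y * Real.sinh y ^ 2
        - 3 * Real.sinh y * Real.cosh y)
  · intro y
    have h := ((hasDerivAt_pow 2 y).add
        (((hasDerivAt_id' y).mul (Real.hasDerivAt_sinh y)).mul (Real.hasDerivAt_cosh y))).sub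
        (((Real.hasDerivAt_sinh y).pow 2).const_mul 2)
    refine h.congr_deriv ?_
    simp only [Pi.mul_apply, Pi.pow_apply, Pi.sub_apply]
    push_cast
    ring
  · simp
  · exact lemM1

-- s = 4x² sinh + x³ cosh + sinh − x cosh  is positive
private lemma lemS : ∀ x : ℝ, 0 < x →
    0 < 4 * x ^ 2 * Real.sinh x + x ^ 3 * Real.cosh x + Real.sinh x - x * Real.cosh x := by
  apply deriv_pos_aux _ (fun y => (7 * y + y ^ 3) * Real.sinh y + 7 * y ^ 2 * Real.cosh y)
  · intro y
    have h := (((((hasDerivAt_pow 2 y).const_mul 4).mul (Real.hasDerivAt_sinh y)).add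
        ((hasDerivAt_pow 3 y).mul (Real.hasDerivAt_cosh y))).add
        (Real.hasDerivAt_sinh y)).sub
        ((hasDerivAt_id' y).mul (Real.hasDerivAt_cosh y))
    refine h.congr_deriv ?_
    push_cast
    ring
  · simp
  · intro y hy
    have hs := Real.sinh_pos_iff.2 hy
    have hc := Real.cosh_pos y
    have h1 : 0 < (7 * y + y ^ 3) * Real.sinh y := mul_pos (by positivity) hs
    have h2 : 0 < 7 * y ^ 2 * Real.cosh y := by positivity
    linarith

-- r = x⁴ sinh + 3x cosh − 3 sinh − x² sinh  is positive
private lemma lemR : ∀ x : ℝ, 0 < x →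
    0 < x ^ 4 * Real.sinh x + 3 * x * Real.cosh x - 3 * Real.sinh x - x ^ 2 * Real.sinh x := by
  apply deriv_pos_aux _
      (fun y => y * (4 * y ^ 2 * Real.sinh y + y ^ 3 * Real.cosh y + Real.sinh y
        - y * Real.cosh y))
  · intro y
    have h := ((((hasDerivAt_pow 4 y).mul (Real.hasDerivAt_sinh y)).add
        (((hasDerivAt_id' y).const_mul 3).mul (Real.hasDerivAt_cosh y))).sub
        ((Real.hasDerivAt_sinh y).const_mul 3)).sub
        ((hasDerivAt_pow 2 y).mul (Real.hasDerivAt_sinh y))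
    refine h.congr_deriv ?_
    push_cast
    ring
  · simp
  · intro y hy
    exact mul_pos hy (lemS y hy)

private lemma lemFeq {x : ℝ} (hx : 0 < x) :
    (3 / x) * (Real.cosh x / Real.sinh x - 1 / x)
      = 3 * (x * Real.cosh x - Real.sinh x) / (x ^ 2 * Real.sinh x) := by
  have hs := Real.sinh_pos_iff.2 hx
  field_simp

private lemma lemFderiv {x : ℝ} (hx : 0 < x) :
    HasDerivAt (fun Φ : ℝ => (3 / Φ) * (Real.cosh Φ / Real.sinh Φ - 1 / Φ))
      (-(3 * (x ^ 2 + x * Real.sinh x * Real.cosh x - 2 * Real.sinh x ^ 2))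
        / (x ^ 3 * Real.sinh x ^ 2)) x := by
  have hs := Real.sinh_pos_iff.2 hx
  have h1 : HasDerivAt (fun y : ℝ => 3 / y) (-(3 / x ^ 2)) x := by
    have h := (hasDerivAt_const x (3:ℝ)).div (hasDerivAt_id' x) hx.ne'
    refine h.congr_deriv ?_
    field_simp
    ring
  have h2 : HasDerivAt (fun y : ℝ => Real.cosh y / Real.sinh y) (-(1 / Real.sinh x ^ 2)) x := by
    have h := (Real.hasDerivAt_cosh x).div (Real.hasDerivAt_sinh x) hs.ne'
    refine h.congr_deriv ?_
    have key : Real.sinh x * Real.sinh x - Real.cosh x * Real.cosh x = -1 := by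
      linear_combination - Real.cosh_sq_sub_sinh_sq x
    rw [key]
    ring
  have h3 : HasDerivAt (fun y : ℝ => 1 / y) (-(1 / x ^ 2)) x := by
    have h := (hasDerivAt_const x (1:ℝ)).div (hasDerivAt_id' x) hx.ne'
    refine h.congr_deriv ?_
    field_simp
    ring
  have H := h1.mul (h2.sub h3)
  refine H.congr_deriv ?_
  simp only [Pi.mul_apply, Pi.pow_apply, Pi.sub_apply]
  field_simp
  ring

private lemma lemAnti :
    StrictAntiOn (fun Φ : ℝ => (3 / Φ) * (Real.cosh Φ / Real.sinh Φ - 1 / Φ)) (Set.Ioi 0) := by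
  apply strictAntiOn_of_deriv_neg (convex_Ioi 0)
  · exact fun y hy => (lemFderiv hy).differentiableAt.continuousAt.continuousWithinAt
  · intro y hy
    rw [interior_Ioi] at hy
    rw [(lemFderiv hy).deriv]
    have hm := lemM y hy
    have hs := Real.sinh_pos_iff.2 hy
    apply div_neg_of_neg_of_pos
    · linarith
    · exact mul_pos (pow_pos hy 3) (pow_pos hs 2)

private lemma lemPos {x : ℝ} (hx : 0 < x) :
    0 < (3 / x) * (Real.cosh x / Real.sinh x - 1 / x) := by
  rw [lemFeq hx]
  have hs := Real.sinh_pos_iff.2 hx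
  exact div_pos (by linarith [lemP x hx]) (by positivity)

private lemma lemLt1 {x : ℝ} (hx : 0 < x) :
    (3 / x) * (Real.cosh x / Real.sinh x - 1 / x) < 1 := by
  rw [lemFeq hx]
  have hs := Real.sinh_pos_iff.2 hx
  rw [div_lt_one (by positivity)]
  nlinarith [lemQ x hx]

private lemma lemLower {x : ℝ} (hx : 0 < x) :
    1 - x ^ 2 ≤ (3 / x) * (Real.cosh x / Real.sinh x - 1 / x) := by
  rw [lemFeq hx]
  have hs := Real.sinh_pos_iff.2 hx
  rw [le_div_iff₀ (by positivity)]
  nlinarith [lemR x hx]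

private lemma lemTend0 :
    Filter.Tendsto (fun Φ : ℝ => (3 / Φ) * (Real.cosh Φ / Real.sinh Φ - 1 / Φ))
      (nhdsWithin 0 (Set.Ioi 0)) (nhds 1) := by
  have h1 : Tendsto (fun x : ℝ => 1 - x ^ 2) (nhdsWithin 0 (Set.Ioi 0)) (nhds 1) := by
    have h : Tendsto (fun x : ℝ => 1 - x ^ 2) (nhds 0) (nhds 1) := by
      have hc : Continuous fun x : ℝ => 1 - x ^ 2 := by continuity
      simpa using hc.tendsto 0
    exact h.mono_left nhdsWithin_le_nhds
  apply tendsto_of_tendsto_of_tendsto_of_le_of_le' h1 tendsto_const_nhds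
  · filter_upwards [self_mem_nhdsWithin] with x hx
    exact lemLower hx
  · filter_upwards [self_mem_nhdsWithin] with x hx
    exact (lemLt1 hx).le

private lemma lemTendTop :
    Filter.Tendsto (fun Φ : ℝ => Φ * ((3 / Φ) * (Real.cosh Φ / Real.sinh Φ - 1 / Φ)))
      Filter.atTop (nhds 3) := by
  have hsinh : Tendsto Real.sinh atTop atTop := by
    apply tendsto_atTop_mono' atTop _ tendsto_id
    filter_upwards [eventually_gt_atTop (0:ℝ)] with x hx
    exact (Real.self_lt_sinh_iff.2 hx).le
  have hquot : Tendsto (fun x : ℝ => Real.exp (-x) / Real.sinh x) atTop (nhds 0) :=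
    Real.tendsto_exp_neg_atTop_nhds_zero.div_atTop hsinh
  have hinv : Tendsto (fun x : ℝ => 1 / x) atTop (nhds 0) := by
    simpa [one_div] using tendsto_inv_atTop_zero
  have hmain : Tendsto (fun x : ℝ => 3 * ((1 + Real.exp (-x) / Real.sinh x) - 1 / x))
      atTop (nhds 3) := by
    have := (((tendsto_const_nhds (x := (1:ℝ)) (f := atTop)).add hquot).sub hinv).const_mul 3
    simpa using this
  apply hmain.congr'
  filter_upwards [eventually_gt_atTop (0:ℝ)] with x hx
  have hs := Real.sinh_pos_iff.2 hx
  have hcs : Real.cosh x / Real.sinh x = 1 + Real.exp (-x) / Real.sinh x := by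
    field_simp
    linarith [Real.cosh_sub_sinh x]
  rw [← hcs]
  field_simp

theorem stmt17 :
    let η : ℝ → ℝ := fun Φ => (3 / Φ) * (Real.cosh Φ / Real.sinh Φ - 1 / Φ)
    StrictAntiOn η (Set.Ioi 0) ∧
    (∀ Φ : ℝ, 0 < Φ → 0 < η Φ ∧ η Φ < 1) ∧
    Filter.Tendsto η (nhdsWithin 0 (Set.Ioi 0)) (nhds 1) ∧
    Filter.Tendsto (fun Φ => Φ * η Φ) Filter.atTop (nhds 3) := by
  intro η
  exact ⟨lemAnti, fun Φ hΦ => ⟨lemPos hΦ, lemLt1 hΦ⟩, lemTend0, lemTendTop⟩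
end
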